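/- Let R = M_n(F) = ⊕_{g∈G} R_g be endowed with a fine grading by a group G (i.e., dim R_g ≤ 1 for all g). Then every nonzero homogeneous element of R is invertible. -/

import Mathlib

/-- in a fine grading of `Mₙ(F)` by a group `G` (all homogeneous
components of dimension at most 1), every nonzero homogeneous element is invertible. -/
theorem fine_grading_homogeneous_invertible {F : Type*} [Field F] {G : Type*} [Group G]
    [DecidableEq G] {n : ℕ} (ℛ : G → Submodule F (Matrix (Fin n) (Fin n) F))
    (hdecomp : DirectSum.IsInternal ℛ)
    (hone : (1 : Matrix (Fin n) (Fin n) F) ∈ ℛ 1)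
    (hmulmem : ∀ (g h : G) (x y : Matrix (Fin n) (Fin n) F),
      x ∈ ℛ g → y ∈ ℛ h → x * y ∈ ℛ (g * h))
    (hfine : ∀ g : G, Module.finrank F (ℛ g) ≤ 1) :
    ∀ g : G, ∀ x ∈ ℛ g, x ≠ 0 → IsUnit x := by
  intro g x hxg hx0
  rcases Nat.eq_zero_or_pos n with hn | hn
  · exfalso
    apply hx0
    ext i j
    exact absurd i.isLt (by simp [hn])
  · by_contra hux
    have hdet : x.det = 0 := by
      by_contra h
      exact hux ((Matrix.isUnit_iff_isUnit_det x).2 (isUnit_iff_ne_zero.2 h))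
    -- `1 ≠ 0` in the matrix ring
    have h1ne : (1 : Matrix (Fin n) (Fin n) F) ≠ 0 := by
      intro h
      have := congrFun (congrFun h ⟨0, hn⟩) ⟨0, hn⟩
      simp [Matrix.one_apply] at this
    -- `ℛ 1` is the span of the identity matrix
    have hR1 : ℛ 1 = Submodule.span F {(1 : Matrix (Fin n) (Fin n) F)} := by
      refine (Submodule.eq_of_le_of_finrank_le ?_ ?_).symm
      · rwa [Submodule.span_singleton_le_iff_mem]
      · rw [finrank_span_singleton h1ne]; exact hfine 1
    -- the "away from 1" part of the grading
    set J : Submodule F (Matrix (Fin n) (Fin n) F) :=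
      ⨆ (u : G) (_ : u ≠ 1), ℛ u with hJ
    have htop : ∀ y : Matrix (Fin n) (Fin n) F, y ∈ ⨆ u, ℛ u := by
      rw [hdecomp.submodule_iSup_eq_top]; exact fun y => trivial
    have keyhom : ∀ (u v : G) (a b : Matrix (Fin n) (Fin n) F),
        a ∈ ℛ u → b ∈ ℛ v → a * x * b ∈ J := by
      intro u v a b ha hb
      have hmem : a * x * b ∈ ℛ (u * g * v) :=
        hmulmem _ _ _ _ (hmulmem _ _ _ _ ha hxg) hb
      by_cases h : u * g * v = 1
      · rw [h, hR1, Submodule.mem_span_singleton] at hmem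
        obtain ⟨c, hc⟩ := hmem
        have hdet2 : (a * x * b).det = 0 := by
          rw [Matrix.det_mul, Matrix.det_mul, hdet]; ring
        have hcn : c ^ n = 0 := by
          rw [← hc] at hdet2
          simpa [Matrix.det_smul] using hdet2
        have hc0 : c = 0 := pow_eq_zero_iff (by omega) |>.mp hcn
        have : a * x * b = 0 := by rw [← hc, hc0, zero_smul]
        rw [this]; exact J.zero_mem
      · exact Submodule.mem_iSup_of_mem (u * g * v) (Submodule.mem_iSup_of_mem h hmem)
    have key2 : ∀ (u : G) (a : Matrix (Fin n) (Fin n) F), a ∈ ℛ u →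
        ∀ b : Matrix (Fin n) (Fin n) F, a * x * b ∈ J := by
      intro u a ha b
      refine Submodule.iSup_induction ℛ (motive := fun b => a * x * b ∈ J) (htop b) ?_ ?_ ?_
      · intro v b hb; exact keyhom u v a b ha hb
      · simpa using J.zero_mem
      · intro y z hy hz; simpa [mul_add] using J.add_mem hy hz
    have key : ∀ a b : Matrix (Fin n) (Fin n) F, a * x * b ∈ J := by
      intro a b
      refine Submodule.iSup_induction ℛ
        (motive := fun a => a * x * b ∈ J) (htop a) ?_ ?_ ?_
      · intro u a ha; exact key2 u a ha b
      · simpa using J.zero_mem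
      · intro y z hy hz; simpa [add_mul] using J.add_mem hy hz
    -- produce the identity as a combination of `a * x * b`
    obtain ⟨i, j, hij⟩ : ∃ i j, x i j ≠ 0 := by
      by_contra h
      push_neg at h
      exact hx0 (by ext i j; simpa using h i j)
    have hid : (1 : Matrix (Fin n) (Fin n) F) =
        ∑ k : Fin n, Matrix.single k i (x i j)⁻¹ * x * Matrix.single j k 1 := by
      ext a b
      rw [Matrix.sum_apply]
      by_cases hab : a = b
      · subst hab
        rw [Finset.sum_eq_single a]
        · simp [Matrix.mul_single_apply_same,
            Matrix.single_mul_apply_same, inv_mul_cancel₀ hij,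
            Matrix.one_apply]
        · intro k _ hk
          rw [Matrix.mul_single_apply_of_ne _ _ _ _ _ (Ne.symm hk)]
        · intro h; exact absurd (Finset.mem_univ a) h
      · rw [Finset.sum_eq_zero, Matrix.one_apply_ne hab]
        intro k _
        by_cases hbk : b = k
        · subst hbk
          rw [Matrix.mul_single_apply_same,
            Matrix.single_mul_apply_of_ne _ _ _ _ _ hab]
          ring
        · rw [Matrix.mul_single_apply_of_ne _ _ _ _ _ hbk]
    have h1J : (1 : Matrix (Fin n) (Fin n) F) ∈ J := by
      rw [hid]
      exact Submodule.sum_mem J fun k _ => key _ _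
    have hdisj : Disjoint (ℛ 1) J := hdecomp.submodule_iSupIndep 1
    have : (1 : Matrix (Fin n) (Fin n) F) = 0 :=
      (Submodule.disjoint_def.mp hdisj) 1 hone h1J
    exact h1ne this
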